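/- arXiv:1106.2204 — 2 statements merged into one kernel-verified Lean document; each statement's English description precedes it below -/
import Mathlib

section
/- Let L be a complete lattice such that L is order-isomorphic to QTh(T₀) for some first-order language and some set T₀ of quasi-identities. Then there exist a join semilattice S with least element 0 and a monoid M of operators on S such that L is order-isomorphic to Con(S,∨,0,M), and moreover there exists an element k ∈ S such that for every s ∈ S and every f ∈ M there exist finitely many g_1, …, g_n ∈ M with f(s) ∨ g_1(k) ∨ ⋯ ∨ g_n(k) = s ∨ g_1(k) ∨ ⋯ ∨ g_n(k). -/
open FirstOrder FirstOrder.Language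

universe u v w


/-- A quasi-identity whose matrix has `n` universally quantified variables. -/
def IsQuasiIdentityN {L : FirstOrder.Language.{u, v}} (n : ℕ) (σ : L.Sentence) : Prop :=
  ∃ (hyps : List (L.BoundedFormula Empty n)) (concl : L.BoundedFormula Empty n),
    (∀ φ ∈ hyps, φ.IsAtomic) ∧ concl.IsAtomic ∧
      σ = BoundedFormula.alls ((hyps.foldr (· ⊓ ·) ⊤).imp concl)

/-- A quasi-identity: the universal closure of an implication whose premise is a
finite (possibly empty) conjunction of atomic formulas and whose conclusion is an
atomic formula. -/
def IsQuasiIdentity {L : FirstOrder.Language.{u, v}} (σ : L.Sentence) : Prop :=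
  ∃ n, IsQuasiIdentityN n σ

/-- A quasi-equational theory extending `T₀`: a set `T` of quasi-identities
containing `T₀` such that every quasi-identity true in all models of `T` belongs
to `T`. -/
def IsQETheory {L : FirstOrder.Language.{u, v}} (T₀ T : L.Theory) : Prop :=
  T₀ ⊆ T ∧ (∀ σ ∈ T, IsQuasiIdentity σ) ∧
    ∀ σ : L.Sentence, IsQuasiIdentity σ → T ⊨ᵇ σ → σ ∈ T

/-- An operator on a join semilattice with least element 0: a map preserving
binary joins and 0. -/
def IsOperator {S : Type u} [SemilatticeSup S] [OrderBot S] (f : S → S) : Prop :=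
  (∀ x y : S, f (x ⊔ y) = f x ⊔ f y) ∧ f ⊥ = ⊥

/-- A congruence of `(S,∨,0,M)`: an equivalence relation compatible with joins
and with every operator in `M`. -/
def IsCong {S : Type u} [SemilatticeSup S] (M : Set (S → S)) (θ : S → S → Prop) : Prop :=
  Equivalence θ ∧ (∀ x y s : S, θ x y → θ (x ⊔ s) (y ⊔ s)) ∧
    (∀ f ∈ M, ∀ x y : S, θ x y → θ (f x) (f y))

namespace QEWork

open FirstOrder.Language.BoundedFormula

variable {L : FirstOrder.Language.{u, v}}

/-- The fixed countably infinite variable type, in universe `v`. -/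
abbrev V : Type v := ULift.{v} ℕ

/-- Atomic formulas over variables `V`. -/
abbrev Atom (L : FirstOrder.Language.{u, v}) : Type (max u v) :=
  {φ : L.Formula (V.{v}) // φ.IsAtomic}

/-- Satisfaction of a list of atoms under a valuation. -/
def SatL {M : Type (max u v)} [L.Structure M] (w : V → M) (F : List (Atom L)) : Prop :=
  ∀ φ ∈ F, φ.1.Realize w

/-- Semantic consequence between premise lists, over models of `T`. -/
def Rel (T : L.Theory) (F G : List (Atom L)) : Prop :=
  ∀ (M : Theory.ModelType.{u, v, max u v} T) (w : V → M), SatL w F → SatL w G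

theorem Rel.of_subset {T : L.Theory} {F G : List (Atom L)} (h : ∀ φ ∈ G, φ ∈ F) :
    Rel T F G := fun _M w hF φ hφ => hF φ (h φ hφ)

theorem Rel.refl {T : L.Theory} (F : List (Atom L)) : Rel T F F := fun _ _ h => h

theorem Rel.trans {T : L.Theory} {F G H : List (Atom L)} (h1 : Rel T F G) (h2 : Rel T G H) :
    Rel T F H := fun M w hF => h2 M w (h1 M w hF)

theorem SatL_append {M : Type (max u v)} [L.Structure M] {w : V → M} {F G : List (Atom L)} :
    SatL w (F ++ G) ↔ SatL w F ∧ SatL w G := by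
  constructor
  · intro h
    exact ⟨fun φ hφ => h φ (List.mem_append_left _ hφ),
           fun φ hφ => h φ (List.mem_append_right _ hφ)⟩
  · rintro ⟨h1, h2⟩ φ hφ
    rcases List.mem_append.1 hφ with h | h
    · exact h1 φ h
    · exact h2 φ h

theorem Rel.mono {T : L.Theory} (hT : T₀ ⊆ T) {F G : List (Atom L)}
    (h : Rel T₀ F G) : Rel T F G := fun M w hF =>
  h (M.subtheoryModel hT) w hF

variable (T₀ : L.Theory)

/-- The base setoid: mutual consequence over models of `T₀`. -/
def lSetoid : Setoid (List (Atom L)) :=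
  ⟨fun F G => Rel T₀ F G ∧ Rel T₀ G F,
   ⟨fun F => ⟨Rel.refl F, Rel.refl F⟩, fun h => ⟨h.2, h.1⟩,
    fun h1 h2 => ⟨h1.1.trans h2.1, h2.2.trans h1.2⟩⟩⟩

/-- The semilattice of finite premise lists modulo `T₀`-equivalence. -/
def S : Type (max u v) := Quotient (lSetoid T₀)

variable {T₀}

/-- Class of a premise list. -/
def mkS (F : List (Atom L)) : S T₀ := Quotient.mk (lSetoid T₀) F

theorem mkS_eq {F G : List (Atom L)} (h1 : Rel T₀ F G) (h2 : Rel T₀ G F) :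
    (mkS F : S T₀) = mkS G := Quotient.sound ⟨h1, h2⟩

theorem mkS_eq_iff {F G : List (Atom L)} :
    (mkS F : S T₀) = mkS G ↔ (Rel T₀ F G ∧ Rel T₀ G F) := by
  constructor
  · intro h; exact Quotient.exact h
  · intro h; exact Quotient.sound h

/-- Pointwise-semantically-equal lists give equal classes. -/
theorem mkS_eq_of_iff {F G : List (Atom L)}
    (h : ∀ (M : Theory.ModelType.{u, v, max u v} T₀) (w : V → M), SatL w F ↔ SatL w G) :
    (mkS F : S T₀) = mkS G :=
  mkS_eq (fun M w hF => (h M w).1 hF) (fun M w hG => (h M w).2 hG)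

instance : SemilatticeSup (S T₀) where
  sup := Quotient.map₂ (· ++ ·) (by
    rintro F F' ⟨h1, h2⟩ G G' ⟨h3, h4⟩
    constructor <;> intro M w hF <;> rw [SatL_append] at hF ⊢
    · exact ⟨h1 M w hF.1, h3 M w hF.2⟩
    · exact ⟨h2 M w hF.1, h4 M w hF.2⟩)
  le x y := Quotient.lift₂ (fun F G => Rel T₀ G F) (by
    rintro F F' G G' ⟨h1, h2⟩ ⟨h3, h4⟩
    exact propext ⟨fun h => h4.trans (h.trans h1), fun h => h3.trans (h.trans h2)⟩) x y
  le_refl x := by induction x using Quotient.ind; exact Rel.refl _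
  le_trans x y z := by
    induction x using Quotient.ind; induction y using Quotient.ind
    induction z using Quotient.ind
    exact fun h1 h2 => Rel.trans h2 h1
  le_antisymm x y := by
    induction x using Quotient.ind; induction y using Quotient.ind
    exact fun h1 h2 => Quotient.sound ⟨h2, h1⟩
  le_sup_left x y := by
    induction x using Quotient.ind; induction y using Quotient.ind
    exact Rel.of_subset fun φ hφ => List.mem_append_left _ hφ
  le_sup_right x y := by
    induction x using Quotient.ind; induction y using Quotient.ind
    exact Rel.of_subset fun φ hφ => List.mem_append_right _ hφ
  sup_le x y z := by
    induction x using Quotient.ind; induction y using Quotient.ind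
    induction z using Quotient.ind
    intro h1 h2
    intro M w hF
    rw [SatL_append]
    exact ⟨h1 M w hF, h2 M w hF⟩

instance : OrderBot (S T₀) where
  bot := mkS []
  bot_le x := by
    induction x using Quotient.ind
    exact fun M w _ φ hφ => absurd hφ List.not_mem_nil

theorem mkS_sup (F G : List (Atom L)) : (mkS F ⊔ mkS G : S T₀) = mkS (F ++ G) := rfl

theorem bot_def : (⊥ : S T₀) = mkS [] := rfl

/-! ### Substitution operators -/

theorem isAtomic_subst {φ : L.Formula (V.{v})} (h : φ.IsAtomic) (g : V → L.Term (V.{v})) :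
    (φ.subst g).IsAtomic := by
  cases h with
  | equal t₁ t₂ => exact BoundedFormula.IsAtomic.equal _ _
  | rel R ts => exact BoundedFormula.IsAtomic.rel _ _

/-- Substitution on atoms. -/
def substA (g : V → L.Term (V.{v})) (φ : Atom L) : Atom L :=
  ⟨φ.1.subst g, isAtomic_subst φ.2 g⟩

theorem realize_substA {M : Type (max u v)} [L.Structure M] (g : V → L.Term (V.{v}))
    (φ : Atom L) (w : V → M) :
    (substA g φ).1.Realize w ↔ φ.1.Realize (fun a => (g a).realize w) :=
  BoundedFormula.realize_subst

theorem SatL_map_substA {M : Type (max u v)} [L.Structure M] (g : V → L.Term (V.{v}))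
    (F : List (Atom L)) (w : V → M) :
    SatL w (F.map (substA g)) ↔ SatL (fun a => (g a).realize w) F := by
  constructor
  · intro h φ hφ
    have := h (substA g φ) (List.mem_map_of_mem hφ)
    rwa [realize_substA] at this
  · intro h ψ hψ
    rcases List.mem_map.1 hψ with ⟨φ, hφ, rfl⟩
    rw [realize_substA]
    exact h φ hφ

/-- The operator on `S` induced by a substitution. -/
def substMap (g : V → L.Term (V.{v})) : S T₀ → S T₀ :=
  Quotient.map (List.map (substA g)) (by
    rintro F G ⟨h1, h2⟩
    constructor <;> intro M w hF <;> rw [SatL_map_substA] at hF ⊢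
    · exact h1 M _ hF
    · exact h2 M _ hF)

theorem substMap_mkS (g : V → L.Term (V.{v})) (F : List (Atom L)) :
    (substMap g (mkS F) : S T₀) = mkS (F.map (substA g)) := rfl

variable (T₀)

/-- The monoid of operators: the identity together with all substitution maps. -/
def Mset : Set (S T₀ → S T₀) := {f | f = id ∨ ∃ g, f = substMap g}

variable {T₀}

theorem id_mem_Mset : id ∈ Mset T₀ := Or.inl rfl

theorem substMap_mem_Mset (g : V → L.Term (V.{v})) : substMap g ∈ Mset T₀ := Or.inr ⟨g, rfl⟩

theorem substMap_isOperator (g : V → L.Term (V.{v})) : IsOperator (substMap g : S T₀ → S T₀) := by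
  constructor
  · intro x y
    induction x using Quotient.ind
    induction y using Quotient.ind
    show (substMap g (mkS _) : S T₀) = _
    rw [substMap_mkS]
    rw [List.map_append]
    rfl
  · rfl

theorem Mset_isOperator : ∀ f ∈ Mset T₀, IsOperator f := by
  rintro f (rfl | ⟨g, rfl⟩)
  · exact ⟨fun _ _ => rfl, rfl⟩
  · exact substMap_isOperator g

theorem substMap_comp (g g' : V → L.Term (V.{v})) :
    (substMap g ∘ substMap g' : S T₀ → S T₀) = substMap (fun a => (g' a).subst g) := by
  funext x
  induction x using Quotient.ind with | _ F =>
  show (substMap g (substMap g' (mkS F)) : S T₀) = substMap (fun a => (g' a).subst g) (mkS F)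
  rw [substMap_mkS, substMap_mkS, substMap_mkS, List.map_map]
  apply mkS_eq_of_iff
  intro M w
  rw [← List.map_map, SatL_map_substA, SatL_map_substA, SatL_map_substA]
  have hvw : (fun a => ((g' a).subst g).realize w) =
      fun a => (g' a).realize (fun b => (g b).realize w) := funext fun a => Term.realize_subst
  rw [hvw]

theorem Mset_comp : ∀ f ∈ Mset T₀, ∀ g ∈ Mset T₀, f ∘ g ∈ Mset T₀ := by
  rintro f (rfl | ⟨g1, rfl⟩) g (rfl | ⟨g2, rfl⟩)
  · exact Or.inl rfl
  · rw [Function.id_comp]; exact Or.inr ⟨g2, rfl⟩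
  · rw [Function.comp_id]; exact Or.inr ⟨g1, rfl⟩
  · rw [substMap_comp]; exact Or.inr ⟨_, rfl⟩

/-! ### Congruence helper lemmas -/

theorem mkS_perm {F G : List (Atom L)} (h : ∀ φ, φ ∈ F ↔ φ ∈ G) :
    (mkS F : S T₀) = mkS G :=
  mkS_eq (Rel.of_subset fun φ hφ => (h φ).2 hφ) (Rel.of_subset fun φ hφ => (h φ).1 hφ)

section CongLemmas

variable {θ : S T₀ → S T₀ → Prop} (hθ : IsCong (Mset T₀) θ)
include hθ

theorem cong_absorb {H A B : List (Atom L)} (hHA : θ (mkS H) (mkS (H ++ A)))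
    (himp : Rel T₀ (H ++ A) B) : θ (mkS H) (mkS (H ++ B)) := by
  have j : θ (mkS (H ++ B)) (mkS ((H ++ A) ++ B)) := hθ.2.1 _ _ (mkS B) hHA
  have e : (mkS ((H ++ A) ++ B) : S T₀) = mkS (H ++ A) := by
    apply mkS_eq
    · exact Rel.of_subset fun φ hφ => by
        rcases List.mem_append.1 hφ with h | h
        · exact List.mem_append_left _ (List.mem_append_left _ h)
        · exact List.mem_append_left _ (List.mem_append_right _ h)
    · intro M w hw
      rw [SatL_append]
      exact ⟨hw, himp M w hw⟩
  rw [e] at j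
  exact hθ.1.trans hHA (hθ.1.symm j)

theorem cong_imp {H B : List (Atom L)} (himp : Rel T₀ H B) :
    θ (mkS H) (mkS (H ++ B)) := by
  have h0 : θ (mkS H) (mkS (H ++ ([] : List (Atom L)))) := by
    rw [List.append_nil]; exact hθ.1.refl _
  exact cong_absorb hθ h0 (by rw [List.append_nil]; exact himp)

theorem cong_union {H A B : List (Atom L)} (hA : θ (mkS H) (mkS (H ++ A)))
    (hB : θ (mkS H) (mkS (H ++ B))) : θ (mkS H) (mkS (H ++ (A ++ B))) := by
  have j : θ (mkS (H ++ A)) (mkS ((H ++ B) ++ A)) := hθ.2.1 _ _ (mkS A) hB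
  have e : (mkS ((H ++ B) ++ A) : S T₀) = mkS (H ++ (A ++ B)) := by
    apply mkS_perm; intro φ; simp only [List.mem_append]; tauto
  rw [e] at j
  exact hθ.1.trans hA j

theorem cong_list {H G : List (Atom L)} (h : ∀ c ∈ G, θ (mkS H) (mkS (H ++ [c]))) :
    θ (mkS H) (mkS (H ++ G)) := by
  induction G with
  | nil => rw [List.append_nil]; exact hθ.1.refl _
  | cons c G ih =>
    have := cong_union hθ (h c (List.mem_cons_self))
      (ih fun c' hc' => h c' (List.mem_cons_of_mem _ hc'))
    exact this

theorem cong_chain {H A B : List (Atom L)} (hA : θ (mkS H) (mkS (H ++ A)))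
    (hAB : θ (mkS A) (mkS (A ++ B))) : θ (mkS H) (mkS (H ++ B)) := by
  have j : θ (mkS (A ++ H)) (mkS ((A ++ B) ++ H)) := hθ.2.1 _ _ (mkS H) hAB
  have e1 : (mkS (A ++ H) : S T₀) = mkS (H ++ A) := by
    apply mkS_perm; intro φ; simp only [List.mem_append]; tauto
  have e2 : (mkS ((A ++ B) ++ H) : S T₀) = mkS (H ++ (A ++ B)) := by
    apply mkS_perm; intro φ; simp only [List.mem_append]; tauto
  rw [e1, e2] at j
  have := hθ.1.trans hA j
  refine cong_absorb hθ this (Rel.of_subset fun φ hφ => ?_)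
  exact List.mem_append_right _ (List.mem_append_right _ hφ)

theorem cong_subst (g : V → L.Term (V.{v})) {x y : S T₀} (h : θ x y) :
    θ (substMap g x) (substMap g y) :=
  hθ.2.2 _ (substMap_mem_Mset g) x y h

end CongLemmas

/-! ### The congruence attached to a theory -/

/-- The congruence on `S` induced by a theory `T ⊇ T₀`. -/
def RelS (T : L.Theory) (hT : T₀ ⊆ T) : S T₀ → S T₀ → Prop :=
  Quotient.lift₂ (fun F G => Rel T F G ∧ Rel T G F) (by
    rintro F G F' G' ⟨h1, h2⟩ ⟨h3, h4⟩
    have h1 := h1.mono hT; have h2 := h2.mono hT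
    have h3 := h3.mono hT; have h4 := h4.mono hT
    apply propext
    constructor
    · rintro ⟨ha, hb⟩
      exact ⟨h2.trans (ha.trans h3), h4.trans (hb.trans h1)⟩
    · rintro ⟨ha, hb⟩
      exact ⟨h1.trans (ha.trans h4), h3.trans (hb.trans h2)⟩)

theorem relS_mk {T : L.Theory} {hT : T₀ ⊆ T} {F G : List (Atom L)} :
    RelS T hT (mkS F) (mkS G) ↔ (Rel T F G ∧ Rel T G F) := Iff.rfl

theorem relS_isCong (T : L.Theory) (hT : T₀ ⊆ T) : IsCong (Mset T₀) (RelS T hT) := by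
  refine ⟨⟨?_, ?_, ?_⟩, ?_, ?_⟩
  · intro x; induction x using Quotient.ind
    exact ⟨Rel.refl _, Rel.refl _⟩
  · intro x y h
    induction x using Quotient.ind; induction y using Quotient.ind
    exact ⟨h.2, h.1⟩
  · intro x y z h1 h2
    induction x using Quotient.ind; induction y using Quotient.ind
    induction z using Quotient.ind
    exact ⟨h1.1.trans h2.1, h2.2.trans h1.2⟩
  · intro x y s h
    induction x using Quotient.ind; induction y using Quotient.ind
    induction s using Quotient.ind
    constructor <;> intro M w hw <;> rw [SatL_append] at hw ⊢
    · exact ⟨h.1 M w hw.1, hw.2⟩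
    · exact ⟨h.2 M w hw.1, hw.2⟩
  · rintro f (rfl | ⟨g, rfl⟩) x y h
    · exact h
    · induction x using Quotient.ind; induction y using Quotient.ind
      constructor <;> intro M w hw <;> rw [SatL_map_substA] at hw ⊢
      · exact h.1 M _ hw
      · exact h.2 M _ hw

theorem relS_mono {T T' : L.Theory} (hT : T₀ ⊆ T) (hT' : T₀ ⊆ T') (hTT' : T ⊆ T')
    {x y : S T₀} (h : RelS T hT x y) : RelS T' hT' x y := by
  induction x using Quotient.ind; induction y using Quotient.ind
  exact ⟨fun M w => h.1 (M.subtheoryModel hTT') w, fun M w => h.2 (M.subtheoryModel hTT') w⟩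

/-! ### Encoding quasi-identities -/

instance emptyFunSubsingleton {M : Type*} : Subsingleton (Empty → M) :=
  ⟨fun f g => funext fun e => e.elim⟩

theorem isAtomic_toFormula {n : ℕ} {ψ : L.BoundedFormula Empty n} (h : ψ.IsAtomic) :
    ψ.toFormula.IsAtomic := by
  cases h with
  | equal t₁ t₂ => exact BoundedFormula.IsAtomic.equal _ _
  | rel R ts => exact BoundedFormula.IsAtomic.rel _ _

theorem isAtomic_formulaRelabel {α β : Type*} {φ : L.Formula α} (g : α → β)
    (h : φ.IsAtomic) : (φ.relabel g).IsAtomic :=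
  h.relabel _

/-- Encode a bounded formula over `Empty` with `n` bound variables as a formula over `V`. -/
def enc {n : ℕ} (ψ : L.BoundedFormula Empty n) : L.Formula (V.{v}) :=
  ψ.toFormula.relabel (Sum.elim (fun e => e.elim) (fun i : Fin n => (⟨i.val⟩ : V)))

/-- Encode an atomic bounded formula as an atom. -/
def encA {n : ℕ} (ψ : L.BoundedFormula Empty n) (h : ψ.IsAtomic) : Atom L :=
  ⟨enc ψ, isAtomic_formulaRelabel _ (isAtomic_toFormula h)⟩

/-- Encode a list of atomic bounded formulas. -/
def encL {n : ℕ} (hyps : List (L.BoundedFormula Empty n))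
    (hh : ∀ ψ ∈ hyps, ψ.IsAtomic) : List (Atom L) :=
  hyps.attach.map fun ψ => encA ψ.1 (hh ψ.1 ψ.2)

theorem realize_enc {M : Type (max u v)} [L.Structure M] {n : ℕ}
    {ψ : L.BoundedFormula Empty n} {w : V → M} :
    (enc ψ).Realize w ↔ ψ.Realize (fun e => e.elim) (fun i : Fin n => w ⟨i.val⟩) := by
  rw [enc, Formula.realize_relabel, BoundedFormula.realize_toFormula]
  exact iff_of_eq (congrArg₂ ψ.Realize (Subsingleton.elim _ _) rfl)

theorem SatL_encL {M : Type (max u v)} [L.Structure M] {n : ℕ}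
    {hyps : List (L.BoundedFormula Empty n)} {hh : ∀ ψ ∈ hyps, ψ.IsAtomic} {w : V → M} :
    SatL w (encL hyps hh) ↔
      ∀ ψ ∈ hyps, ψ.Realize (fun e => e.elim) (fun i : Fin n => w ⟨i.val⟩) := by
  constructor
  · intro h ψ hψ
    have := h (encA ψ (hh ψ hψ)) (by
      apply List.mem_map.2
      exact ⟨⟨ψ, hψ⟩, List.mem_attach _ _, rfl⟩)
    have this' : (enc ψ).Realize w := this
    rwa [realize_enc] at this'
  · intro h φ hφ
    rcases List.mem_map.1 hφ with ⟨⟨ψ, hψ⟩, _, rfl⟩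
    show (enc ψ).Realize w
    rw [realize_enc]
    exact h ψ hψ

/-- The quasi-identity sentence with hypotheses `hyps` and conclusion `concl`. -/
def qiSentence (n : ℕ) (hyps : List (L.BoundedFormula Empty n))
    (concl : L.BoundedFormula Empty n) : L.Sentence :=
  BoundedFormula.alls ((hyps.foldr (· ⊓ ·) ⊤).imp concl)

/-- **Key bridging lemma**: a theory models a quasi-identity iff the corresponding
premise-list consequence holds over models of the theory. -/
theorem models_iff_rel {T : L.Theory} {n : ℕ} {hyps : List (L.BoundedFormula Empty n)}
    {concl : L.BoundedFormula Empty n} (hh : ∀ ψ ∈ hyps, ψ.IsAtomic) (hc : concl.IsAtomic) :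
    T ⊨ᵇ qiSentence n hyps concl ↔
      Rel T (encL hyps hh) (encL hyps hh ++ [encA concl hc]) := by
  have fin0Sub : ∀ (M : Type (max u v)), Subsingleton (Fin 0 → M) :=
    fun M => ⟨fun f g => funext fun i => i.elim0⟩
  constructor
  · intro h M w hw
    rw [SatL_append]
    refine ⟨hw, ?_⟩
    intro φ hφ
    rw [List.mem_singleton] at hφ
    subst hφ
    show (enc concl).Realize w
    rw [realize_enc]
    have hs := h M (fun e => e.elim) default
    have hs' : Formula.Realize (M := M)
        ((hyps.foldr (· ⊓ ·) ⊤).imp concl).alls (fun e => e.elim) := hs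
    rw [BoundedFormula.realize_alls] at hs'
    have h2 := hs' (fun i : Fin n => w ⟨i.val⟩)
    rw [BoundedFormula.realize_imp, BoundedFormula.realize_foldr_inf] at h2
    apply h2
    intro ψ hψ
    exact (SatL_encL.1 hw) ψ hψ
  · intro h M v xs
    haveI := fin0Sub M
    have hxs : xs = default := Subsingleton.elim _ _
    have hv : v = (fun e => e.elim) := Subsingleton.elim _ _
    subst hxs; subst hv
    show Formula.Realize (M := M) ((hyps.foldr (· ⊓ ·) ⊤).imp concl).alls (fun e => e.elim)
    rw [BoundedFormula.realize_alls]
    intro xs'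
    rw [BoundedFormula.realize_imp, BoundedFormula.realize_foldr_inf]
    intro hpre
    set w : V → M := fun a => if hlt : a.down < n then xs' ⟨a.down, hlt⟩
      else Classical.arbitrary M with hw
    have hxw : (fun i : Fin n => w ⟨i.val⟩) = xs' := by
      funext i
      simp only [hw, i.isLt, dif_pos]
    have hsat : SatL w (encL hyps hh) := by
      rw [SatL_encL, hxw]
      exact hpre
    have hres := h M w hsat
    rw [SatL_append] at hres
    have hco := hres.2 (encA concl hc) (List.mem_singleton_self _)
    have hco' : (enc concl).Realize w := hco
    rw [realize_enc, hxw] at hco'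
    exact hco'

/-! ### The theory attached to a congruence -/

variable (T₀) in
/-- The theory of quasi-identities attached to a congruence `θ` of `S`. -/
def Tθ (θ : S T₀ → S T₀ → Prop) : L.Theory :=
  {σ | ∃ (n : ℕ) (hyps : List (L.BoundedFormula Empty n)) (concl : L.BoundedFormula Empty n)
      (hh : ∀ ψ ∈ hyps, ψ.IsAtomic) (hc : concl.IsAtomic),
      σ = qiSentence n hyps concl ∧
      θ (mkS (encL hyps hh)) (mkS (encL hyps hh ++ [encA concl hc]))}

theorem Tθ_isQI {θ : S T₀ → S T₀ → Prop} : ∀ σ ∈ Tθ T₀ θ, IsQuasiIdentity σ := by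
  rintro σ ⟨n, hyps, concl, hh, hc, rfl, _⟩
  exact ⟨n, hyps, concl, hh, hc, rfl⟩

theorem T₀_subset_Tθ (hQI : ∀ σ ∈ T₀, IsQuasiIdentity σ) {θ : S T₀ → S T₀ → Prop}
    (hθ : IsCong (Mset T₀) θ) : T₀ ⊆ Tθ T₀ θ := by
  intro σ hσ
  obtain ⟨n, hyps, concl, hh, hc, hσeq⟩ := hQI σ hσ
  refine ⟨n, hyps, concl, hh, hc, hσeq, ?_⟩
  have hmod : T₀ ⊨ᵇ qiSentence n hyps concl := by
    have := Theory.models_sentence_of_mem (T := T₀) hσ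
    rwa [hσeq] at this
  have hrel : Rel T₀ (encL hyps hh) (encL hyps hh ++ [encA concl hc]) :=
    (models_iff_rel hh hc).1 hmod
  have : (mkS (encL hyps hh) : S T₀) = mkS (encL hyps hh ++ [encA concl hc]) :=
    mkS_eq hrel (Rel.of_subset fun φ hφ => List.mem_append_left _ hφ)
  rw [← this]
  exact hθ.1.refl _

/-- Membership of a theory's own quasi-identities in its congruence. -/
theorem relS_pair_iff_mem {T : L.Theory} (hT : IsQETheory T₀ T) {n : ℕ}
    {hyps : List (L.BoundedFormula Empty n)} {concl : L.BoundedFormula Empty n}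
    (hh : ∀ ψ ∈ hyps, ψ.IsAtomic) (hc : concl.IsAtomic) :
    RelS T hT.1 (mkS (encL hyps hh)) (mkS (encL hyps hh ++ [encA concl hc])) ↔
      qiSentence n hyps concl ∈ T := by
  constructor
  · intro h
    have := (models_iff_rel hh hc).2 h.1
    exact hT.2.2 _ ⟨n, hyps, concl, hh, hc, rfl⟩ this
  · intro h
    refine ⟨(models_iff_rel hh hc).1 (Theory.models_sentence_of_mem h), ?_⟩
    exact Rel.of_subset fun φ hφ => List.mem_append_left _ hφ

/-! ### Equality and relation atoms -/

/-- Equality atom. -/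
def eqAtom (t u : L.Term (V.{v})) : Atom L :=
  ⟨Term.equal t u, BoundedFormula.IsAtomic.equal _ _⟩

theorem realize_eqAtom {M : Type (max u v)} [L.Structure M] {t u : L.Term (V.{v})} {w : V → M} :
    (eqAtom t u).1.Realize w ↔ t.realize w = u.realize w := Formula.realize_equal

/-- Relation atom. -/
def relAtom {k : ℕ} (R : L.Relations k) (ts : Fin k → L.Term (V.{v})) : Atom L :=
  ⟨R.formula ts, BoundedFormula.IsAtomic.rel _ _⟩

theorem realize_relAtom {M : Type (max u v)} [L.Structure M] {k : ℕ} {R : L.Relations k}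
    {ts : Fin k → L.Term (V.{v})} {w : V → M} :
    (relAtom R ts).1.Realize w ↔ Structure.RelMap R (fun i => (ts i).realize w) :=
  Formula.realize_rel

theorem SatL_singleton {M : Type (max u v)} [L.Structure M] {w : V → M} {φ : Atom L} :
    SatL w [φ] ↔ φ.1.Realize w := by
  constructor
  · intro h; exact h φ (List.mem_singleton_self _)
  · intro h ψ hψ; rw [List.mem_singleton] at hψ; subst hψ; exact h

theorem mkS_singleton_congr {H : List (Atom L)} {φ ψ : Atom L}
    (h : ∀ (M : Theory.ModelType.{u, v, max u v} T₀) (w : V → M),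
      φ.1.Realize w ↔ ψ.1.Realize w) :
    (mkS (H ++ [φ]) : S T₀) = mkS (H ++ [ψ]) := by
  apply mkS_eq_of_iff
  intro M w
  rw [SatL_append, SatL_append, SatL_singleton, SatL_singleton, h M w]

/-! ### The canonical (term) model of a congruence -/

section Canonical

variable (Θ : {θ : S T₀ → S T₀ → Prop // IsCong (Mset T₀) θ}) (H : List (Atom L))

/-- Term equality relation induced by a congruence and a premise list. -/
def tEq (t u : L.Term (V.{v})) : Prop := Θ.1 (mkS H) (mkS (H ++ [eqAtom t u]))

theorem tEq_refl (t : L.Term (V.{v})) : tEq Θ H t t := by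
  apply cong_imp Θ.2
  intro M w _ φ hφ
  rw [List.mem_singleton] at hφ; subst hφ
  rw [realize_eqAtom]

theorem tEq_symm {t u : L.Term (V.{v})} (h : tEq Θ H t u) : tEq Θ H u t := by
  refine cong_absorb Θ.2 h ?_
  intro M w hw φ hφ
  rw [List.mem_singleton] at hφ; subst hφ
  rw [SatL_append, SatL_singleton, realize_eqAtom] at hw
  rw [realize_eqAtom]
  exact hw.2.symm

theorem tEq_trans {t u r : L.Term (V.{v})} (h1 : tEq Θ H t u) (h2 : tEq Θ H u r) :
    tEq Θ H t r := by
  have hu := cong_union Θ.2 h1 h2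
  refine cong_absorb Θ.2 hu ?_
  intro M w hw φ hφ
  rw [List.mem_singleton] at hφ; subst hφ
  rw [SatL_append] at hw
  have e1 := hw.2 (eqAtom t u) (by simp [List.mem_append])
  have e2 := hw.2 (eqAtom u r) (by simp [List.mem_append])
  rw [realize_eqAtom] at e1 e2
  rw [realize_eqAtom]
  exact e1.trans e2

/-- The setoid of terms. -/
def tSetoid : Setoid (L.Term (V.{v})) :=
  ⟨tEq Θ H, ⟨tEq_refl Θ H, tEq_symm Θ H, tEq_trans Θ H⟩⟩

/-- The term structure on `L.Term V`. -/
def termStructure : L.Structure (L.Term (V.{v})) where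
  funMap f ts := Term.func f ts
  RelMap R ts := Θ.1 (mkS H) (mkS (H ++ [relAtom R ts]))

theorem termStructure_realize {β : Type*} (g : β → L.Term (V.{v})) (t : L.Term β) :
    @Term.realize L _ (termStructure Θ H) _ g t = t.subst g := by
  induction t with
  | var a => rfl
  | func f ts ih =>
    show Term.func f (fun i => @Term.realize L _ (termStructure Θ H) _ g (ts i)) = _
    simp only [ih]
    rfl

theorem tEq_list {E : List (Atom L)}
    (h : ∀ c ∈ E, Θ.1 (mkS H) (mkS (H ++ [c]))) : Θ.1 (mkS H) (mkS (H ++ E)) :=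
  cong_list Θ.2 h

/-- The prestructure for the canonical model. -/
instance canPrestructure : L.Prestructure (tSetoid Θ H) where
  toStructure := termStructure Θ H
  fun_equiv := by
    intro n f x y hxy
    show tEq Θ H _ _
    have hE : Θ.1 (mkS H) (mkS (H ++ List.ofFn (fun i => eqAtom (x i) (y i)))) := by
      apply tEq_list
      intro c hc
      rw [List.mem_ofFn] at hc
      rcases hc with ⟨i, rfl⟩
      exact hxy i
    refine cong_absorb Θ.2 hE ?_
    intro M w hw φ hφ
    rw [List.mem_singleton] at hφ; subst hφ
    rw [SatL_append] at hw
    rw [realize_eqAtom]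
    show Term.realize w (Term.func f x) = Term.realize w (Term.func f y)
    have hcomp : ∀ i, Term.realize w (x i) = Term.realize w (y i) := by
      intro i
      have := hw.2 (eqAtom (x i) (y i)) (by
        rw [List.mem_ofFn]; exact ⟨i, rfl⟩)
      rwa [realize_eqAtom] at this
    simp only [Term.realize]
    congr 1
    funext i
    exact hcomp i
  rel_equiv := by
    intro n R x y hxy
    show Θ.1 (mkS H) (mkS (H ++ [relAtom R x])) = Θ.1 (mkS H) (mkS (H ++ [relAtom R y]))
    have hE : Θ.1 (mkS H) (mkS (H ++ List.ofFn (fun i => eqAtom (x i) (y i)))) := by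
      apply tEq_list
      intro c hc
      rw [List.mem_ofFn] at hc
      rcases hc with ⟨i, rfl⟩
      exact hxy i
    apply propext
    have main : ∀ (x' y' : Fin n → L.Term (V.{v})),
        Θ.1 (mkS H) (mkS (H ++ List.ofFn (fun i => eqAtom (x' i) (y' i)))) →
        Θ.1 (mkS H) (mkS (H ++ [relAtom R x'])) → Θ.1 (mkS H) (mkS (H ++ [relAtom R y'])) := by
      intro x' y' hE' hx'
      have hu := cong_union Θ.2 hx' hE'
      refine cong_absorb Θ.2 hu ?_
      intro M w hw φ hφ
      rw [List.mem_singleton] at hφ; subst hφ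
      rw [SatL_append] at hw
      have hrel := hw.2 (relAtom R x') (by simp [List.mem_append])
      rw [realize_relAtom] at hrel
      rw [realize_relAtom]
      have hcomp : ∀ i, Term.realize w (x' i) = Term.realize w (y' i) := by
        intro i
        have := hw.2 (eqAtom (x' i) (y' i)) (by
          rw [List.mem_append, List.mem_ofFn]; exact Or.inr ⟨i, rfl⟩)
        rwa [realize_eqAtom] at this
      have : (fun i => Term.realize w (x' i)) = fun i => Term.realize w (y' i) :=
        funext hcomp
      rwa [← this]
    have hE_symm : Θ.1 (mkS H) (mkS (H ++ List.ofFn (fun i => eqAtom (y i) (x i)))) := by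
      apply tEq_list
      intro c hc
      rw [List.mem_ofFn] at hc
      rcases hc with ⟨i, rfl⟩
      exact tEq_symm Θ H (hxy i)
    exact ⟨main x y hE, main y x hE_symm⟩

/-- The canonical model carrier. -/
abbrev CanM : Type (max u v) := Quotient (tSetoid Θ H)

theorem canM_term_realize (g : V → L.Term (V.{v})) (t : L.Term (V.{v})) :
    Term.realize (M := CanM Θ H) (fun a => (⟦g a⟧ : CanM Θ H)) t
      = (⟦t.subst g⟧ : CanM Θ H) := by
  rw [Term.realize_quotient_mk', termStructure_realize]

end Canonical

section Canonical2

variable (Θ : {θ : S T₀ → S T₀ → Prop // IsCong (Mset T₀) θ}) (H : List (Atom L))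

/-- Extend a substitution to `V ⊕ Fin 0`. -/
def substG (g : V → L.Term (V.{v})) : (V.{v} ⊕ Fin 0) → L.Term (V.{v}) :=
  Sum.elim g (fun i => i.elim0)

theorem canM_term_realize' {β : Type*} (g : β → L.Term (V.{v})) (t : L.Term β) :
    Term.realize (M := CanM Θ H) (fun a => (⟦g a⟧ : CanM Θ H)) t
      = (⟦t.subst g⟧ : CanM Θ H) := by
  rw [Term.realize_quotient_mk', termStructure_realize]

theorem canM_realize_atom (g : V → L.Term (V.{v})) (φ : Atom L) :
    Formula.Realize (M := CanM Θ H) φ.1 (fun a => (⟦g a⟧ : CanM Θ H)) ↔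
      Θ.1 (mkS H) (mkS (H ++ [substA g φ])) := by
  obtain ⟨φf, hφ⟩ := φ
  have helim : ∀ (xs : Fin 0 → CanM Θ H), (Sum.elim (fun a => (⟦g a⟧ : CanM Θ H)) xs) =
      fun a => (⟦substG g a⟧ : CanM Θ H) := by
    intro xs
    funext a
    rcases a with a | i
    · rfl
    · exact i.elim0
  cases hφ with
  | equal t₁ t₂ =>
    show BoundedFormula.Realize (t₁.bdEqual t₂) (fun a => (⟦g a⟧ : CanM Θ H)) _ ↔ _
    rw [BoundedFormula.realize_bdEqual, helim _, canM_term_realize', canM_term_realize']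
    constructor
    · intro h
      have he : tEq Θ H (t₁.subst (substG g)) (t₂.subst (substG g)) := Quotient.exact h
      have hcls : (mkS (H ++ [eqAtom (t₁.subst (substG g)) (t₂.subst (substG g))]) : S T₀)
          = mkS (H ++ [substA g ⟨t₁.bdEqual t₂, BoundedFormula.IsAtomic.equal t₁ t₂⟩]) := by
        apply mkS_singleton_congr
        intro M w
        rw [realize_eqAtom, realize_substA]
        show _ ↔ BoundedFormula.Realize (t₁.bdEqual t₂) (fun a => (g a).realize w) _
        rw [BoundedFormula.realize_bdEqual, Term.realize_subst, Term.realize_subst]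
        have hgen : ∀ (xs : Fin 0 → M), (fun a => (substG g a).realize w) =
            Sum.elim (fun a => (g a).realize w) xs := by
          intro xs
          funext a; rcases a with a | i
          · rfl
          · exact i.elim0
        rw [hgen _]
      rw [← hcls]
      exact he
    · intro h
      apply Quotient.sound
      show tEq Θ H _ _
      have hcls : (mkS (H ++ [eqAtom (t₁.subst (substG g)) (t₂.subst (substG g))]) : S T₀)
          = mkS (H ++ [substA g ⟨t₁.bdEqual t₂, BoundedFormula.IsAtomic.equal t₁ t₂⟩]) := by
        apply mkS_singleton_congr
        intro M w
        rw [realize_eqAtom, realize_substA]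
        show _ ↔ BoundedFormula.Realize (t₁.bdEqual t₂) (fun a => (g a).realize w) _
        rw [BoundedFormula.realize_bdEqual, Term.realize_subst, Term.realize_subst]
        have hgen : ∀ (xs : Fin 0 → M), (fun a => (substG g a).realize w) =
            Sum.elim (fun a => (g a).realize w) xs := by
          intro xs
          funext a; rcases a with a | i
          · rfl
          · exact i.elim0
        rw [hgen _]
      rw [tEq, hcls]
      exact h
  | rel R ts =>
    show BoundedFormula.Realize (R.boundedFormula ts) (fun a => (⟦g a⟧ : CanM Θ H)) _ ↔ _
    rw [BoundedFormula.realize_rel, helim _]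
    have hterms : (fun i => Term.realize (M := CanM Θ H) (fun a => (⟦substG g a⟧ : CanM Θ H))
        (ts i)) = fun i => (⟦(ts i).subst (substG g)⟧ : CanM Θ H) := by
      funext i
      rw [canM_term_realize']
    rw [hterms, relMap_quotient_mk']
    show Θ.1 (mkS H) (mkS (H ++ [relAtom R (fun i => (ts i).subst (substG g))])) ↔ _
    have hcls : (mkS (H ++ [relAtom R (fun i => (ts i).subst (substG g))]) : S T₀)
        = mkS (H ++ [substA g ⟨R.boundedFormula ts, BoundedFormula.IsAtomic.rel R ts⟩]) := by
      apply mkS_singleton_congr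
      intro M w
      rw [realize_relAtom, realize_substA]
      show _ ↔ BoundedFormula.Realize (R.boundedFormula ts) (fun a => (g a).realize w) _
      rw [BoundedFormula.realize_rel]
      have hterm : ∀ (xs : Fin 0 → M) i, ((ts i).subst (substG g)).realize w =
          (ts i).realize (Sum.elim (fun a => (g a).realize w) xs) := by
        intro xs i
        rw [Term.realize_subst]
        congr 1
        funext a; rcases a with a | i
        · rfl
        · exact i.elim0
      have hfun : (fun i => ((ts i).subst (substG g)).realize w)
          = fun i => (ts i).realize (Sum.elim (fun a => (g a).realize w)
              (default : Fin 0 → M)) := by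
        funext i; exact hterm _ i
      rw [hfun]
    rw [hcls]

theorem canM_models : (CanM Θ H) ⊨ Tθ T₀ Θ.1 := by
  rw [Theory.model_iff]
  rintro σ ⟨n, hyps, concl, hh, hc, rfl, hpair⟩
  show Formula.Realize (M := CanM Θ H) ((hyps.foldr (· ⊓ ·) ⊤).imp concl).alls _
  rw [BoundedFormula.realize_alls]
  intro xs
  rw [BoundedFormula.realize_imp, BoundedFormula.realize_foldr_inf]
  intro hpre
  set g : V → L.Term (V.{v}) := fun a =>
    if hlt : a.down < n then (xs ⟨a.down, hlt⟩).out else Term.var a with hg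
  have hvq : (fun i : Fin n => (⟦g (⟨i.val⟩ : V)⟧ : CanM Θ H)) = xs := by
    funext i
    show (⟦if hlt : (i : ℕ) < n then (xs ⟨i.val, hlt⟩).out else Term.var ⟨i.val⟩⟧ : CanM Θ H) = _
    rw [dif_pos i.isLt]
    show Quotient.mk _ (Quotient.out (xs ⟨i.val, i.isLt⟩)) = xs i
    rw [Quotient.out_eq]
  have hsatL : SatL (fun a => (⟦g a⟧ : CanM Θ H)) (encL hyps hh) := by
    rw [SatL_encL]
    intro ψ hψ
    have := hpre ψ hψ
    rw [hvq]
    exact iff_of_eq (congrArg₂ ψ.Realize (Subsingleton.elim _ _) rfl) |>.2 this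
  have hatoms : ∀ φ ∈ encL hyps hh, Θ.1 (mkS H) (mkS (H ++ [substA g φ])) := by
    intro φ hφ
    exact (canM_realize_atom Θ H g φ).1 (hsatL φ hφ)
  have hA : Θ.1 (mkS H) (mkS (H ++ (encL hyps hh).map (substA g))) := by
    apply cong_list Θ.2
    intro c hc'
    rcases List.mem_map.1 hc' with ⟨φ, hφ, rfl⟩
    exact hatoms φ hφ
  have hsp := cong_subst Θ.2 g hpair
  rw [substMap_mkS, substMap_mkS, List.map_append] at hsp
  have hchain := cong_chain Θ.2 hA hsp
  have hconcl := (canM_realize_atom Θ H g (encA concl hc)).2 hchain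
  have hconcl' : (enc concl).Realize (fun a => (⟦g a⟧ : CanM Θ H)) := hconcl
  rw [realize_enc] at hconcl'
  rw [hvq] at hconcl'
  exact iff_of_eq (congrArg₂ concl.Realize (Subsingleton.elim _ _) rfl) |>.2 hconcl'

/-- The canonical model as a bundled model of `Tθ`. -/
def canModelType : (Tθ T₀ Θ.1).ModelType where
  Carrier := CanM Θ H
  is_model := canM_models Θ H
  nonempty' := ⟨(⟦Term.var ⟨0⟩⟧ : CanM Θ H)⟩

theorem relS_Tθ_to_cong (hT : T₀ ⊆ Tθ T₀ Θ.1) {x y : S T₀}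
    (h : RelS (Tθ T₀ Θ.1) hT x y) : Θ.1 x y := by
  induction x using Quotient.ind with | _ F =>
  induction y using Quotient.ind with | _ G =>
  have key : ∀ (F G : List (Atom L)), Rel (Tθ T₀ Θ.1) F G → Θ.1 (mkS F) (mkS (F ++ G)) := by
    intro F G hrel
    have hsatF : SatL (M := CanM Θ F) (fun a => (⟦Term.var a⟧ : CanM Θ F)) F := by
      intro φ hφ
      apply (canM_realize_atom Θ F Term.var φ).2
      have e : (mkS (F ++ [substA Term.var φ]) : S T₀) = mkS (F ++ [φ]) := by
        apply mkS_singleton_congr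
        intro M w
        rw [realize_substA]
        exact Iff.rfl
      rw [e]
      apply cong_imp Θ.2
      intro M w hw ψ hψ
      rw [List.mem_singleton] at hψ; subst hψ
      exact hw _ hφ
    have hsatG := hrel (canModelType Θ F) (fun a => (⟦Term.var a⟧ : CanM Θ F)) hsatF
    apply cong_list Θ.2
    intro c hc
    have := (canM_realize_atom Θ F Term.var c).1 (hsatG c hc)
    have e : (mkS (F ++ [substA Term.var c]) : S T₀) = mkS (F ++ [c]) := by
      apply mkS_singleton_congr
      intro M w
      rw [realize_substA]
      exact Iff.rfl
    rwa [e] at this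
  have h1 := key F G h.1
  have h2 := key G F h.2
  have e : (mkS (G ++ F) : S T₀) = mkS (F ++ G) := by
    apply mkS_perm; intro φ; simp only [List.mem_append]; tauto
  rw [e] at h2
  exact Θ.2.1.trans h1 (Θ.2.1.symm h2)

end Canonical2

/-! ### Variable bookkeeping: decoding premise lists into quasi-identities -/

theorem term_realize_agree {M : Type*} [L.Structure M] (t : L.Term (V.{v} ⊕ Fin 0))
    {w w' : V → M} (hw : ∀ a ∈ t.varFinsetLeft, w a = w' a) (xs xs' : Fin 0 → M) :
    t.realize (Sum.elim w xs) = t.realize (Sum.elim w' xs') := by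
  induction t with
  | var a =>
    rcases a with a | i
    · exact hw a (by simp [Term.varFinsetLeft])
    · exact i.elim0
  | func f ts ih =>
    show Structure.funMap f _ = Structure.funMap f _
    congr 1
    funext i
    exact ih i fun a ha => hw a (by
      simp only [Term.varFinsetLeft, Finset.mem_biUnion]
      exact ⟨i, Finset.mem_univ i, ha⟩)

theorem atom_realize_agree {M : Type*} [L.Structure M] (φ : Atom L) {w w' : V → M}
    (hw : ∀ a ∈ φ.1.freeVarFinset, w a = w' a) : φ.1.Realize w ↔ φ.1.Realize w' := by
  obtain ⟨φf, hφ⟩ := φ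
  cases hφ with
  | equal t₁ t₂ =>
    show BoundedFormula.Realize (t₁.bdEqual t₂) w _ ↔ BoundedFormula.Realize (t₁.bdEqual t₂) w' _
    rw [BoundedFormula.realize_bdEqual, BoundedFormula.realize_bdEqual]
    have h1 : t₁.realize (Sum.elim w default) = t₁.realize (Sum.elim w' default) :=
      term_realize_agree t₁ (fun a ha => hw a (by
        show a ∈ t₁.varFinsetLeft ∪ t₂.varFinsetLeft; exact Finset.mem_union_left _ ha)) _ _
    have h2 : t₂.realize (Sum.elim w default) = t₂.realize (Sum.elim w' default) :=
      term_realize_agree t₂ (fun a ha => hw a (by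
        show a ∈ t₁.varFinsetLeft ∪ t₂.varFinsetLeft; exact Finset.mem_union_right _ ha)) _ _
    rw [h1, h2]
  | rel R ts =>
    show BoundedFormula.Realize (R.boundedFormula ts) w _ ↔
      BoundedFormula.Realize (R.boundedFormula ts) w' _
    rw [BoundedFormula.realize_rel, BoundedFormula.realize_rel]
    have h1 : (fun i => (ts i).realize (Sum.elim w default)) =
        fun i => (ts i).realize (Sum.elim w' default) := by
      funext i
      exact term_realize_agree (ts i) (fun a ha => hw a (by
        show a ∈ Finset.univ.biUnion fun j => (ts j).varFinsetLeft
        exact Finset.mem_biUnion.2 ⟨i, Finset.mem_univ i, ha⟩)) _ _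
    rw [h1]

/-- Collapse variables above `n`. -/
def ρ (n : ℕ) : V.{v} → V.{v} := fun a => if a.down < n then a else ⟨0⟩

/-- The substitution collapsing variables above `n`. -/
def gvar (n : ℕ) : V.{v} → L.Term (V.{v}) := fun a => Term.var (ρ n a)

/-- Decode a formula over `V` into a bounded formula with `n` bound variables. -/
def decB (n : ℕ) (hn : 0 < n) (φf : L.Formula (V.{v})) : L.BoundedFormula Empty n :=
  BoundedFormula.relabel
    (fun a : V => Sum.inr (if h : a.down < n then (⟨a.down, h⟩ : Fin n) else ⟨0, hn⟩)) φf

theorem realize_decB {M : Type (max u v)} [L.Structure M] {n : ℕ} {hn : 0 < n}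
    {φf : L.Formula (V.{v})} {w : V → M} :
    (enc (decB n hn φf)).Realize w ↔ φf.Realize (fun a => w (ρ n a)) := by
  rw [realize_enc, decB, BoundedFormula.realize_relabel]
  have h1 : (Sum.elim (fun e : Empty => e.elim)
        ((fun i : Fin n => w ⟨i.val⟩) ∘ Fin.castAdd 0) ∘
        (fun a : V => Sum.inr (if h : a.down < n then (⟨a.down, h⟩ : Fin n) else ⟨0, hn⟩)))
      = fun a => w (ρ n a) := by
    funext a
    by_cases h : a.down < n
    · simp only [Function.comp_apply, dif_pos h, Sum.elim_inr, ρ, if_pos h]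
      rfl
    · simp only [Function.comp_apply, dif_neg h, Sum.elim_inr, ρ, if_neg h]
      rfl
  rw [h1]
  show BoundedFormula.Realize φf _ _ ↔ BoundedFormula.Realize φf _ _
  exact iff_of_eq (congrArg _ (Subsingleton.elim _ _))

/-- The finite set of variables of a premise list. -/
def VFinset (F : List (Atom L)) : Finset (V.{v}) :=
  F.foldr (fun φ s => φ.1.freeVarFinset ∪ s) ∅

theorem subset_VFinset {F : List (Atom L)} : ∀ φ ∈ F, φ.1.freeVarFinset ⊆ VFinset F := by
  induction F with
  | nil => intro φ h; exact absurd h List.not_mem_nil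
  | cons ψ F ih =>
    intro φ hφ
    rcases List.mem_cons.1 hφ with rfl | h
    · exact Finset.subset_union_left
    · exact (ih φ h).trans Finset.subset_union_right

/-- A strict bound for the variables of a premise list. -/
def nBound (F : List (Atom L)) : ℕ := ((VFinset F).sup fun a => a.down) + 1

theorem lt_nBound {F : List (Atom L)} {φ : Atom L} (hφ : φ ∈ F) :
    ∀ a ∈ φ.1.freeVarFinset, a.down < nBound F := by
  intro a ha
  have := Finset.le_sup (f := fun a : V => a.down) (subset_VFinset φ hφ ha)
  exact Nat.lt_succ_of_le this

theorem rho_eq_of_lt {n : ℕ} {a : V.{v}} (h : a.down < n) : ρ n a = a := if_pos h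

section Decode

variable (Θ : {θ : S T₀ → S T₀ → Prop // IsCong (Mset T₀) θ})

theorem cong_single {F G : List (Atom L)} {c : Atom L} (h : Θ.1 (mkS F) (mkS G))
    (hc : c ∈ G) : Θ.1 (mkS F) (mkS (F ++ [c])) := by
  have j := Θ.2.2.1 _ _ (mkS F) h
  have e1 : (mkS (F ++ F) : S T₀) = mkS F := by
    apply mkS_perm; intro φ; simp only [List.mem_append]; tauto
  have e2 : (mkS (G ++ F) : S T₀) = mkS (F ++ G) := by
    apply mkS_perm; intro φ; simp only [List.mem_append]; tauto
  rw [mkS_sup, mkS_sup, e1, e2] at j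
  have j2 := Θ.2.2.1 _ _ (mkS [c]) j
  have e3 : (mkS ((F ++ G) ++ [c]) : S T₀) = mkS (F ++ G) := by
    apply mkS_perm; intro φ
    simp only [List.mem_append, List.mem_singleton]
    constructor
    · rintro ((h | h) | rfl)
      · exact Or.inl h
      · exact Or.inr h
      · exact Or.inr hc
    · rintro (h | h)
      · exact Or.inl (Or.inl h)
      · exact Or.inl (Or.inr h)
  rw [mkS_sup, mkS_sup, e3] at j2
  exact Θ.2.1.trans j (Θ.2.1.symm j2)

theorem SatL_encL_decB {M : Type (max u v)} [L.Structure M] {n : ℕ} {hn : 0 < n}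
    {F : List (Atom L)} {hh : ∀ ψ ∈ F.map (fun φ => decB n hn φ.1), ψ.IsAtomic} {w : V → M} :
    SatL w (encL (F.map fun φ => decB n hn φ.1) hh) ↔
      ∀ φ ∈ F, φ.1.Realize (fun a => w (ρ n a)) := by
  rw [SatL_encL]
  constructor
  · intro h φ hφ
    have := h (decB n hn φ.1) (List.mem_map_of_mem hφ)
    rw [← realize_decB (hn := hn)]
    rw [realize_enc]
    exact this
  · intro h ψ hψ
    rcases List.mem_map.1 hψ with ⟨φ, hφ, rfl⟩
    rw [← realize_enc]
    rw [realize_decB]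
    exact h φ hφ

theorem cong_to_rel (hQI : ∀ σ ∈ T₀, IsQuasiIdentity σ) {F G : List (Atom L)}
    (h : Θ.1 (mkS F) (mkS G)) : Rel (Tθ T₀ Θ.1) F G := by
  intro N w hF c hc
  -- the pair for `c`
  have hpairc : Θ.1 (mkS F) (mkS (F ++ [c])) := cong_single Θ h hc
  set n : ℕ := nBound (c :: F) with hn_def
  have hn : 0 < n := Nat.succ_pos _
  set hyps : List (L.BoundedFormula Empty n) := F.map (fun φ => decB n hn φ.1) with hyps_def
  have hh : ∀ ψ ∈ hyps, ψ.IsAtomic := by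
    intro ψ hψ
    rcases List.mem_map.1 hψ with ⟨φ, _, rfl⟩
    exact φ.2.relabel _
  have hcA : (decB n hn c.1).IsAtomic := c.2.relabel _
  -- class computations
  have e1 : (mkS (encL hyps hh) : S T₀) = mkS (F.map (substA (gvar n))) := by
    apply mkS_eq_of_iff
    intro M w'
    rw [SatL_encL_decB, SatL_map_substA]
    exact Iff.rfl
  have e2 : (mkS (encL hyps hh ++ [encA (decB n hn c.1) hcA]) : S T₀)
      = mkS (F.map (substA (gvar n)) ++ [substA (gvar n) c]) := by
    apply mkS_eq_of_iff
    intro M w'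
    rw [SatL_append, SatL_append, SatL_singleton, SatL_singleton]
    constructor
    · rintro ⟨h1, h2⟩
      refine ⟨?_, ?_⟩
      · rw [SatL_map_substA]
        rw [SatL_encL_decB] at h1
        exact h1
      · rw [realize_substA]
        have h2' : (enc (decB n hn c.1)).Realize w' := h2
        rw [realize_decB] at h2'
        exact h2'
    · rintro ⟨h1, h2⟩
      refine ⟨?_, ?_⟩
      · rw [SatL_encL_decB]
        rw [SatL_map_substA] at h1
        exact h1
      · show (enc (decB n hn c.1)).Realize w'
        rw [realize_decB]
        rw [realize_substA] at h2
        exact h2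
  -- the pair after substitution
  have hsub := cong_subst Θ.2 (gvar n) hpairc
  rw [substMap_mkS, substMap_mkS, List.map_append] at hsub
  have hmem : qiSentence n hyps (decB n hn c.1) ∈ Tθ T₀ Θ.1 := by
    refine ⟨n, hyps, decB n hn c.1, hh, hcA, rfl, ?_⟩
    rw [e1, e2]
    exact hsub
  -- use the model N
  have hrel : Rel (Tθ T₀ Θ.1) (encL hyps hh) (encL hyps hh ++ [encA (decB n hn c.1) hcA]) :=
    (models_iff_rel hh hcA).1 (Theory.models_sentence_of_mem hmem)
  have hsatL : SatL w (encL hyps hh) := by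
    rw [SatL_encL_decB]
    intro φ hφ
    rw [atom_realize_agree φ (w := fun a => w (ρ n a)) (w' := w) ?_]
    · exact hF φ hφ
    · intro a ha
      have hlt : a.down < n := by rw [hn_def]; exact lt_nBound (List.mem_cons_of_mem _ hφ) a ha
      show w (ρ n a) = w a
      rw [rho_eq_of_lt hlt]
  have := hrel N w hsatL
  rw [SatL_append, SatL_singleton] at this
  have h2' : (enc (decB n hn c.1)).Realize w := this.2
  rw [realize_decB] at h2'
  rw [atom_realize_agree c (w := fun a => w (ρ n a)) (w' := w) ?_] at h2'
  · exact h2'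
  · intro a ha
    have hlt : a.down < n := by rw [hn_def]; exact lt_nBound List.mem_cons_self a ha
    show w (ρ n a) = w a
    rw [rho_eq_of_lt hlt]

theorem cong_to_relS (hQI : ∀ σ ∈ T₀, IsQuasiIdentity σ) {x y : S T₀} (h : Θ.1 x y) :
    RelS (Tθ T₀ Θ.1) (T₀_subset_Tθ hQI Θ.2) x y := by
  induction x using Quotient.ind with | _ F =>
  induction y using Quotient.ind with | _ G =>
  exact ⟨cong_to_rel Θ hQI h, cong_to_rel Θ hQI (Θ.2.1.symm h)⟩

end Decode

/-! ### The main order isomorphism -/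

section MainIso

variable (T₀) (hQI : ∀ σ ∈ T₀, IsQuasiIdentity σ)

/-- From theories to congruences. -/
def theoryToCong (T : {T : L.Theory // IsQETheory T₀ T}) :
    {θ : S T₀ → S T₀ → Prop // IsCong (Mset T₀) θ} :=
  ⟨RelS T.1 T.2.1, relS_isCong T.1 T.2.1⟩

/-- From congruences to theories. -/
def congToTheory (Θ : {θ : S T₀ → S T₀ → Prop // IsCong (Mset T₀) θ}) :
    {T : L.Theory // IsQETheory T₀ T} := by
  refine ⟨Tθ T₀ Θ.1, T₀_subset_Tθ hQI Θ.2, Tθ_isQI, ?_⟩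
  intro σ hσQI hmod
  obtain ⟨n, hyps, concl, hh, hc, heq⟩ := hσQI
  subst heq
  have hmod' : Tθ T₀ Θ.1 ⊨ᵇ qiSentence n hyps concl := hmod
  have hrel := (models_iff_rel hh hc).1 hmod'
  have hrelS : RelS (Tθ T₀ Θ.1) (T₀_subset_Tθ hQI Θ.2)
      (mkS (encL hyps hh)) (mkS (encL hyps hh ++ [encA concl hc])) :=
    ⟨hrel, Rel.of_subset fun φ hφ => List.mem_append_left _ hφ⟩
  have hpair := relS_Tθ_to_cong Θ (T₀_subset_Tθ hQI Θ.2) hrelS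
  exact ⟨n, hyps, concl, hh, hc, rfl, hpair⟩

/-- The isomorphism between quasi-equational theories over `T₀` and congruences of
`(S, ∨, 0, Mset)`. -/
def mainIso : {T : L.Theory // IsQETheory T₀ T} ≃o
    {θ : S T₀ → S T₀ → Prop // IsCong (Mset T₀) θ} where
  toFun := theoryToCong T₀
  invFun := congToTheory T₀ hQI
  left_inv := by
    intro T
    apply Subtype.ext
    ext σ
    constructor
    · rintro ⟨n, hyps, concl, hh, hc, rfl, hpair⟩
      exact (relS_pair_iff_mem T.2 hh hc).1 hpair
    · intro hσ
      obtain ⟨n, hyps, concl, hh, hc, heq⟩ := T.2.2.1 σ hσ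
      refine ⟨n, hyps, concl, hh, hc, heq, ?_⟩
      refine (relS_pair_iff_mem T.2 hh hc).2 ?_
      show qiSentence n hyps concl ∈ T.1
      rw [qiSentence, ← heq]
      exact hσ
  right_inv := by
    intro Θ
    apply Subtype.ext
    funext x y
    apply propext
    constructor
    · exact fun hr => relS_Tθ_to_cong Θ (T₀_subset_Tθ hQI Θ.2) hr
    · exact fun hr => cong_to_relS Θ hQI hr
  map_rel_iff' := by
    intro T T'
    constructor
    · intro h σ hσ
      obtain ⟨n, hyps, concl, hh, hc, heq⟩ := T.2.2.1 σ hσ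
      have hp : RelS T.1 T.2.1 (mkS (encL hyps hh)) (mkS (encL hyps hh ++ [encA concl hc])) := by
        refine (relS_pair_iff_mem T.2 hh hc).2 ?_
        show qiSentence n hyps concl ∈ T.1
        rw [qiSentence, ← heq]
        exact hσ
      have h' : RelS T.1 T.2.1 ≤ RelS T'.1 T'.2.1 := h
      have hp' : RelS T'.1 T'.2.1 (mkS (encL hyps hh))
          (mkS (encL hyps hh ++ [encA concl hc])) := h' _ _ hp
      have := (relS_pair_iff_mem T'.2 hh hc).1 hp'
      have heq2 : qiSentence n hyps concl = σ := by rw [qiSentence, ← heq]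
      rwa [heq2] at this
    · intro h
      show RelS T.1 T.2.1 ≤ RelS T'.1 T'.2.1
      exact fun x y hxy => relS_mono T.2.1 T'.2.1 h hxy

end MainIso

/-! ### The pseudo-one -/

/-- The pseudo-one generator: the atom `v₀ ≈ v₁`. -/
def kAtom : Atom L := eqAtom (Term.var ⟨0⟩) (Term.var ⟨1⟩)

theorem foldr_sup_eq (σs : List (V → L.Term (V.{v}))) :
    ((σs.map fun gg => substMap gg (mkS [kAtom] : S T₀)).foldr (· ⊔ ·) ⊥ : S T₀)
      = mkS (σs.map fun gg => substA gg kAtom) := by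
  induction σs with
  | nil => rfl
  | cons gg σs ih =>
    show (substMap gg (mkS [kAtom]) ⊔ ((σs.map fun gg => substMap gg (mkS [kAtom])).foldr
      (· ⊔ ·) ⊥) : S T₀) = _
    rw [ih]
    rfl

theorem pseudoOne_lemma : ∀ s : S T₀, ∀ f ∈ Mset T₀, ∃ gs : List (S T₀ → S T₀),
    gs ≠ [] ∧ (∀ g ∈ gs, g ∈ Mset T₀) ∧
    f s ⊔ (gs.map fun g => g (mkS [kAtom])).foldr (· ⊔ ·) ⊥ =
      s ⊔ (gs.map fun g => g (mkS [kAtom])).foldr (· ⊔ ·) ⊥ := by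
  intro s f hf
  rcases hf with rfl | ⟨g, rfl⟩
  · refine ⟨[id], by simp, ?_, rfl⟩
    intro g hg
    rw [List.mem_singleton] at hg
    subst hg
    exact id_mem_Mset
  · induction s using Quotient.ind with | _ F =>
    set σs : List (V → L.Term (V.{v})) := Term.var :: ((VFinset F).toList.map
      (fun a => fun b : V => if b.down = 0 then Term.var a
        else if b.down = 1 then g a else Term.var b)) with hσs
    refine ⟨σs.map substMap, by simp [hσs], ?_, ?_⟩
    · intro g' hg'
      rcases List.mem_map.1 hg' with ⟨gg, _, rfl⟩
      exact substMap_mem_Mset gg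
    · rw [List.map_map]
      have hcomp : ((fun g' : S T₀ → S T₀ => g' (mkS [kAtom])) ∘ substMap)
          = fun gg => substMap gg (mkS [kAtom] : S T₀) := rfl
      rw [hcomp, foldr_sup_eq]
      show (substMap g (mkS F) ⊔ _ : S T₀) = mkS F ⊔ _
      rw [substMap_mkS, mkS_sup, mkS_sup]
      apply mkS_eq_of_iff
      intro M w
      rw [SatL_append, SatL_append]
      have hagree : SatL w (σs.map fun gg => substA gg kAtom) →
          ∀ a ∈ VFinset F, (g a).realize w = w a := by
        intro hE a ha
        set σa : V → L.Term (V.{v}) := fun b : V => if b.down = 0 then Term.var a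
          else if b.down = 1 then g a else Term.var b with hσa
        have hmem : σa ∈ σs := by
          rw [hσs]
          exact List.mem_cons_of_mem _ (List.mem_map_of_mem (Finset.mem_toList.2 ha))
        have hsat := hE _ (List.mem_map_of_mem (f := fun gg => substA gg kAtom) hmem)
        rw [realize_substA] at hsat
        have hsat2 : (eqAtom (Term.var ⟨0⟩) (Term.var ⟨1⟩)).1.Realize
            (fun b : V => (σa b).realize w) := hsat
        have hsat' := realize_eqAtom.1 hsat2
        simp only [Term.realize_var] at hsat'
        have h0 : σa (⟨0⟩ : V) = Term.var a := by rw [hσa]; norm_num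
        have h1 : σa (⟨1⟩ : V) = g a := by rw [hσa]; norm_num
        rw [h0, h1] at hsat'
        simp only [Term.realize_var] at hsat'
        exact hsat'.symm
      constructor
      · rintro ⟨h1, h2⟩
        refine ⟨?_, h2⟩
        intro φ hφ
        rw [SatL_map_substA] at h1
        have := h1 φ hφ
        rw [atom_realize_agree φ (w := fun a => (g a).realize w) (w' := w)
          (fun a ha => hagree h2 a (subset_VFinset φ hφ ha))] at this
        exact this
      · rintro ⟨h1, h2⟩
        refine ⟨?_, h2⟩
        rw [SatL_map_substA]
        intro φ hφ
        rw [atom_realize_agree φ (w := fun a => (g a).realize w) (w' := w)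
          (fun a ha => hagree h2 a (subset_VFinset φ hφ ha))]
        exact h1 φ hφ

end QEWork

/-- A representation of the lattice `L'` as the congruence lattice of a join
semilattice `S` with `0` and a monoid `M` of operators, together with a
pseudo-one element `k ∈ S`: for every `s ∈ S` and every `f ∈ M` there are
finitely many `g₁, …, gₙ ∈ M` with
`f(s) ∨ g₁(k) ∨ ⋯ ∨ gₙ(k) = s ∨ g₁(k) ∨ ⋯ ∨ gₙ(k)`. -/
structure PseudoOneRepresentation (L' : Type w) [CompleteLattice L'] :
    Type (max w (max u v) + 1) where
  S : Type (max u v)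
  [sl : SemilatticeSup S]
  [bo : OrderBot S]
  M : Set (S → S)
  op : ∀ f ∈ M, IsOperator f
  idMem : id ∈ M
  compMem : ∀ f ∈ M, ∀ g ∈ M, f ∘ g ∈ M
  iso : L' ≃o {θ : S → S → Prop // IsCong M θ}
  k : S
  pseudoOne : ∀ s : S, ∀ f ∈ M, ∃ gs : List (S → S), gs ≠ [] ∧ (∀ g ∈ gs, g ∈ M) ∧
    f s ⊔ (gs.map fun g => g k).foldr (· ⊔ ·) ⊥ =
      s ⊔ (gs.map fun g => g k).foldr (· ⊔ ·) ⊥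

/-- Let `L'` be a complete lattice order-isomorphic to `QTh(T₀)`
for some first-order language and some set `T₀` of quasi-identities.  Then there
exist a join semilattice `S` with least element `0` and a monoid `M` of operators
on `S` such that `L'` is order-isomorphic to `Con(S,∨,0,M)`, and moreover there
exists `k ∈ S` such that for every `s ∈ S` and `f ∈ M` there exist finitely many
`g₁, …, gₙ ∈ M` with `f(s) ∨ g₁(k) ∨ ⋯ ∨ gₙ(k) = s ∨ g₁(k) ∨ ⋯ ∨ gₙ(k)`. -/
theorem pseudoOne_of_qth (L' : Type w) [CompleteLattice L']
    (h : ∃ (L : FirstOrder.Language.{u, v}) (T₀ : L.Theory),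
      (∀ σ ∈ T₀, IsQuasiIdentity σ) ∧
      Nonempty (L' ≃o {T : L.Theory // IsQETheory T₀ T})) :
    Nonempty (PseudoOneRepresentation.{u, v, w} L') := by
  obtain ⟨L, T₀, hQI, ⟨e⟩⟩ := h
  exact ⟨{ S := QEWork.S T₀
           M := QEWork.Mset T₀
           op := QEWork.Mset_isOperator
           idMem := QEWork.id_mem_Mset
           compMem := QEWork.Mset_comp
           iso := e.trans (QEWork.mainIso T₀ hQI)
           k := QEWork.mkS [QEWork.kAtom]
           pseudoOne := QEWork.pseudoOne_lemma }⟩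
end

section
/- There is no first-order language L and set T₀ of quasi-identities in L such that the lattice QTh(T₀) of quasi-equational theories extending T₀, ordered by inclusion, is order-isomorphic to the ordinal ω + 1, i.e., to the chain ℕ with a greatest element adjoined. -/
open FirstOrder FirstOrder.Language

universe u v

/-! ### Auxiliary machinery for the proof -/

namespace NoQTh17

open FirstOrder.Language.BoundedFormula

universe w'

variable {L : FirstOrder.Language.{u, v}}

/-- The set of all quasi-identities, the top quasi-equational theory. -/
def QI (L : FirstOrder.Language.{u, v}) : L.Theory := {σ | IsQuasiIdentity σ}

theorem isQE_QI {T₀ : L.Theory} (hT₀ : ∀ σ ∈ T₀, IsQuasiIdentity σ) : IsQETheory T₀ (QI L) :=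
  ⟨hT₀, fun _ h => h, fun _ h _ => h⟩

/-- Eliminate a semantic consequence at an arbitrary model. -/
theorem models_elim {T : L.Theory} {φ : L.Sentence} (h : T ⊨ᵇ φ) (M : Type w')
    [L.Structure M] [Nonempty M] (hM : M ⊨ T) : M ⊨ φ := by
  haveI := hM
  exact h.realize_sentence M

/-- Introduce a semantic consequence from a statement about arbitrary models. -/
theorem models_intro {T : L.Theory} {φ : L.Sentence}
    (h : ∀ (M : Type (max u v)) [L.Structure M] [Nonempty M], M ⊨ T → M ⊨ φ) :
    T ⊨ᵇ φ := by
  intro M v xs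
  have hs : M.Carrier ⊨ φ := h M.Carrier M.is_model
  rwa [Subsingleton.elim v default, Subsingleton.elim xs default]

theorem models_mono {T T' : L.Theory} (hsub : T ⊆ T') {φ : L.Sentence}
    (h : T ⊨ᵇ φ) : T' ⊨ᵇ φ :=
  models_intro fun M _ _ hM => models_elim h M (hM.mono hsub)

/-- The deductive (quasi-identity) closure of a set of sentences. -/
def Ded (X : L.Theory) : L.Theory := {σ | IsQuasiIdentity σ ∧ X ⊨ᵇ σ}

theorem subset_Ded {X : L.Theory} (hX : ∀ σ ∈ X, IsQuasiIdentity σ) : X ⊆ Ded X :=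
  fun σ hσ => ⟨hX σ hσ, models_intro fun M _ _ hM => by
    haveI := hM
    exact Theory.realize_sentence_of_mem X hσ⟩

theorem Ded_isQE {T₀ X : L.Theory} (h₀ : T₀ ⊆ X) (hX : ∀ σ ∈ X, IsQuasiIdentity σ) :
    IsQETheory T₀ (Ded X) := by
  refine ⟨fun σ hσ => subset_Ded hX (h₀ hσ), fun σ hσ => hσ.1, fun σ hqi h => ⟨hqi, ?_⟩⟩
  refine models_intro fun M _ _ hM => models_elim h M ?_
  exact (Theory.model_iff (Ded X)).mpr fun ψ hψ => models_elim hψ.2 M hM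

theorem Ded_le {T₀ X T : L.Theory} (hT : IsQETheory T₀ T) (hXT : X ⊆ T) : Ded X ⊆ T :=
  fun σ hσ => hT.2.2 σ hσ.1 (models_mono hXT hσ.2)

/-- Realizing a universally closed bounded formula. -/
theorem realize_alls_sentence {M : Type w'} [L.Structure M] {n : ℕ}
    {φ : L.BoundedFormula Empty n} :
    M ⊨ BoundedFormula.alls φ ↔ ∀ xs : Fin n → M, φ.Realize default xs :=
  realize_alls

/-- The quasi-identity `∀ x y, x = y`. -/
def delta (L : FirstOrder.Language.{u, v}) : L.Sentence :=
  BoundedFormula.alls ((([] : List (L.BoundedFormula Empty 2)).foldr (· ⊓ ·) ⊤).imp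
    ((Term.var (Sum.inr 0)).bdEqual (Term.var (Sum.inr 1))))

theorem isQI_delta : IsQuasiIdentity (delta L) :=
  ⟨2, [], (Term.var (Sum.inr 0)).bdEqual (Term.var (Sum.inr 1)),
    fun _ h => absurd h List.not_mem_nil, BoundedFormula.IsAtomic.equal _ _, rfl⟩

theorem realize_delta_iff {M : Type w'} [L.Structure M] :
    M ⊨ delta L ↔ ∀ x y : M, x = y := by
  rw [delta, realize_alls_sentence]
  simp only [List.foldr_nil, realize_imp, realize_top, realize_bdEqual, Term.realize_var,
    Sum.elim_inr, true_implies]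
  constructor
  · intro h x y
    simpa using h ![x, y]
  · intro h xs
    exact h _ _

/-- The quasi-identity `∀ x, R (x, ..., x)`. -/
def rho {k : ℕ} (R : L.Relations k) : L.Sentence :=
  BoundedFormula.alls ((([] : List (L.BoundedFormula Empty 1)).foldr (· ⊓ ·) ⊤).imp
    (R.boundedFormula fun _ => Term.var (Sum.inr 0)))

theorem isQI_rho {k : ℕ} (R : L.Relations k) : IsQuasiIdentity (rho R) :=
  ⟨1, [], R.boundedFormula fun _ => Term.var (Sum.inr 0),
    fun _ h => absurd h List.not_mem_nil, BoundedFormula.IsAtomic.rel _ _, rfl⟩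

theorem realize_rho_iff {M : Type w'} [L.Structure M] {k : ℕ} {R : L.Relations k} :
    M ⊨ rho R ↔ ∀ x : M, Structure.RelMap R (fun _ => x) := by
  rw [rho, realize_alls_sentence]
  simp only [List.foldr_nil, realize_imp, realize_top, realize_rel, Term.realize_var,
    Sum.elim_inr, true_implies]
  constructor
  · intro h x
    exact h (fun _ => x)
  · intro h xs
    exact h (xs 0)

theorem relMap_all {M : Type w'} [L.Structure M] [Nonempty M] [Subsingleton M]
    (h : ∀ (k : ℕ) (R : L.Relations k), M ⊨ rho (L := L) R) {k : ℕ} (R : L.Relations k)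
    (x : Fin k → M) : Structure.RelMap R x := by
  obtain ⟨a⟩ := ‹Nonempty M›
  have ha := (realize_rho_iff.mp (h k R)) a
  have hx : x = fun _ => a := funext fun i => Subsingleton.elim _ _
  rwa [hx]

theorem realize_atomic_of_full {M : Type w'} [L.Structure M] [Subsingleton M]
    (hfull : ∀ {k : ℕ} (R : L.Relations k) (x : Fin k → M), Structure.RelMap R x)
    {n : ℕ} {φ : L.BoundedFormula Empty n} (h : φ.IsAtomic) (v : Empty → M) (xs : Fin n → M) :
    φ.Realize v xs := by
  cases h with
  | equal t₁ t₂ => exact (realize_bdEqual _ _).mpr (Subsingleton.elim _ _)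
  | rel R ts => exact realize_rel.mpr (hfull _ _)

theorem isAtomic_castLE {m n : ℕ} (h : m ≤ n) {φ : L.BoundedFormula Empty m}
    (hφ : φ.IsAtomic) : (φ.castLE h).IsAtomic := by
  cases hφ with
  | equal t₁ t₂ => exact BoundedFormula.IsAtomic.equal _ _
  | rel R ts => exact BoundedFormula.IsAtomic.rel _ _

theorem realize_castLE_atomic {m n : ℕ} (h : m ≤ n) {φ : L.BoundedFormula Empty m}
    (hφ : φ.IsAtomic) {M : Type w'} [L.Structure M] (v : Empty → M) (xs : Fin n → M) :
    (φ.castLE h).Realize v xs ↔ φ.Realize v (xs ∘ Fin.castLE h) := by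
  cases hφ with
  | equal t₁ t₂ =>
    simp [BoundedFormula.castLE, Term.bdEqual, BoundedFormula.Realize, Term.realize_relabel,
      Sum.elim_comp_map]
  | rel R ts =>
    simp [BoundedFormula.castLE, Relations.boundedFormula, BoundedFormula.Realize,
      Term.realize_relabel, Sum.elim_comp_map]

/-- The quasi-identity `∀ x y₁ ... yₙ, R(x,...,x) ∧ hyps → concl`. -/
def star {k n : ℕ} (R : L.Relations k) (hyps : List (L.BoundedFormula Empty n))
    (concl : L.BoundedFormula Empty n) : L.Sentence :=
  BoundedFormula.alls
    (((R.boundedFormula (fun _ => Term.var (Sum.inr (Fin.last n))) ::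
        hyps.map (BoundedFormula.castLE (Nat.le_succ n))).foldr (· ⊓ ·) ⊤).imp
      (concl.castLE (Nat.le_succ n)))

theorem isQI_star {k n : ℕ} (R : L.Relations k) {hyps : List (L.BoundedFormula Empty n)}
    {concl : L.BoundedFormula Empty n} (hh : ∀ φ ∈ hyps, φ.IsAtomic) (hc : concl.IsAtomic) :
    IsQuasiIdentity (star R hyps concl) := by
  refine ⟨n + 1, R.boundedFormula (fun _ => Term.var (Sum.inr (Fin.last n))) ::
    hyps.map (BoundedFormula.castLE (Nat.le_succ n)), concl.castLE (Nat.le_succ n),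
    ?_, isAtomic_castLE _ hc, rfl⟩
  intro φ hφ
  rcases List.mem_cons.mp hφ with rfl | hφ
  · exact BoundedFormula.IsAtomic.rel _ _
  · obtain ⟨ψ, hψ, rfl⟩ := List.mem_map.mp hφ
    exact isAtomic_castLE _ (hh ψ hψ)

theorem snoc_comp_castLE {M : Type w'} {n : ℕ} (xs : Fin n → M) (a : M) :
    Fin.snoc xs a ∘ Fin.castLE (Nat.le_succ n) = xs := by
  funext i
  simp only [Function.comp_apply]
  exact Fin.snoc_castSucc ..

theorem star_spec1 {M : Type w'} [L.Structure M] [Nonempty M] {k n : ℕ} {R : L.Relations k}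
    {hyps : List (L.BoundedFormula Empty n)} {concl : L.BoundedFormula Empty n}
    (hh : ∀ φ ∈ hyps, φ.IsAtomic) (hc : concl.IsAtomic)
    (hρ : M ⊨ rho R) (hstar : M ⊨ star R hyps concl) :
    M ⊨ BoundedFormula.alls ((hyps.foldr (· ⊓ ·) ⊤).imp concl) := by
  obtain ⟨a⟩ := ‹Nonempty M›
  rw [star, realize_alls_sentence] at hstar
  rw [realize_alls_sentence]
  intro xs
  rw [realize_imp, realize_foldr_inf]
  intro hprem
  have hs := hstar (Fin.snoc xs a)
  rw [realize_imp, realize_foldr_inf] at hs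
  have hcon : (concl.castLE (Nat.le_succ n)).Realize default (Fin.snoc xs a) := by
    apply hs
    intro φ hφ
    rcases List.mem_cons.mp hφ with rfl | hφ
    · rw [realize_rel]
      have h3 := realize_rho_iff.mp hρ ((Fin.snoc xs a : Fin (n + 1) → M) (Fin.last n))
      convert h3 using 2
      rfl
    · obtain ⟨ψ, hψ, rfl⟩ := List.mem_map.mp hφ
      rw [realize_castLE_atomic _ (hh ψ hψ), snoc_comp_castLE]
      exact hprem ψ hψ
  rw [realize_castLE_atomic _ hc, snoc_comp_castLE] at hcon
  exact hcon

theorem star_spec2 {M : Type w'} [L.Structure M] [Subsingleton M] {k n : ℕ}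
    {R : L.Relations k} {hyps : List (L.BoundedFormula Empty n)}
    {concl : L.BoundedFormula Empty n} (hρ : ¬ M ⊨ rho R) : M ⊨ star R hyps concl := by
  rw [star, realize_alls_sentence]
  intro xs
  rw [realize_imp, realize_foldr_inf]
  intro hprem
  exfalso
  apply hρ
  rw [realize_rho_iff]
  intro x
  have hatom := hprem _ List.mem_cons_self
  rw [realize_rel] at hatom
  convert hatom using 2
  all_goals exact Subsingleton.elim _ _

end NoQTh17

/-- There is no first-order language `L` and set `T₀` of
quasi-identities in `L` such that the lattice `QTh(T₀)` of quasi-equational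
theories extending `T₀`, ordered by inclusion, is order-isomorphic to the
ordinal `ω + 1`, i.e. to the chain `ℕ` with a greatest element adjoined. -/
theorem no_qth_omega_add_one :
    ¬ ∃ (L : FirstOrder.Language.{u, v}) (T₀ : L.Theory),
      (∀ σ ∈ T₀, IsQuasiIdentity σ) ∧
      Nonempty ({T : L.Theory // IsQETheory T₀ T} ≃o WithTop ℕ) := by
  classical
  rintro ⟨L, T₀, hT₀, ⟨f⟩⟩
  have hQI : IsQETheory T₀ (NoQTh17.QI L) := NoQTh17.isQE_QI hT₀
  -- the top theory is the set of all quasi-identities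
  have hsub_top : ∀ X : {T : L.Theory // IsQETheory T₀ T}, X.1 ⊆ (f.symm ⊤).1 := by
    intro X
    have h1 : X ≤ f.symm ⊤ := by
      have h2 := f.symm.monotone (le_top (a := f X))
      rwa [f.symm_apply_apply] at h2
    exact h1
  have htop : (f.symm ⊤).1 = NoQTh17.QI L :=
    subset_antisymm (fun σ h => (f.symm ⊤).2.2.1 σ h) (hsub_top ⟨NoQTh17.QI L, hQI⟩)
  -- total order
  have chain : ∀ X Y : {T : L.Theory // IsQETheory T₀ T}, X.1 ⊆ Y.1 ∨ Y.1 ⊆ X.1 := by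
    intro X Y
    rcases le_total (f X) (f Y) with h | h
    · exact Or.inl (f.le_iff_le.mp h)
    · exact Or.inr (f.le_iff_le.mp h)
  -- the chain of theories below the top
  set Tn : ℕ → L.Theory := fun n => (f.symm (WithTop.some n)).1 with hTn
  have Tn_mono : ∀ {p q : ℕ}, p ≤ q → Tn p ⊆ Tn q := by
    intro p q h
    exact f.symm.monotone (WithTop.coe_le_coe.mpr h)
  have Tn_ne_top : ∀ p : ℕ, Tn p ≠ NoQTh17.QI L := by
    intro p h
    have h2 : f.symm (WithTop.some p) = f.symm ⊤ := Subtype.ext (h.trans htop.symm)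
    exact WithTop.coe_ne_top (f.symm.injective h2)
  -- the union of the chain is a quasi-equational theory, hence the top theory
  set U : L.Theory := ⋃ n, Tn n with hU
  have hUqe : IsQETheory T₀ U := by
    refine ⟨fun σ h => Set.mem_iUnion.mpr ⟨0, (f.symm _).2.1 h⟩, ?_, ?_⟩
    · intro σ hσ
      obtain ⟨n, hn⟩ := Set.mem_iUnion.mp hσ
      exact (f.symm _).2.2.1 σ hn
    · intro σ hqi h
      obtain ⟨T0f, hsubf, hmodf⟩ := Theory.models_iff_finset_models.mp h
      have hfin : ∀ s : Finset L.Sentence, ↑s ⊆ U → ∃ n : ℕ, ↑s ⊆ Tn n := by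
        intro s
        induction s using Finset.induction_on with
        | empty => exact fun _ => ⟨0, by simp⟩
        | @insert φ s hφ ih =>
          intro hsub
          rw [Finset.coe_insert, Set.insert_subset_iff] at hsub
          obtain ⟨m, hm⟩ := Set.mem_iUnion.mp hsub.1
          obtain ⟨n, hn⟩ := ih hsub.2
          refine ⟨max m n, ?_⟩
          rw [Finset.coe_insert, Set.insert_subset_iff]
          exact ⟨Tn_mono (le_max_left _ _) hm, hn.trans (Tn_mono (le_max_right _ _))⟩
      obtain ⟨n, hn⟩ := hfin T0f hsubf
      exact Set.mem_iUnion.mpr ⟨n, (f.symm _).2.2.2 σ hqi (NoQTh17.models_mono hn hmodf)⟩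
  have hUtop : U = NoQTh17.QI L := by
    have hle : ∀ n : ℕ, WithTop.some n ≤ f ⟨U, hUqe⟩ := by
      intro n
      have h0 : Tn n ⊆ U := Set.subset_iUnion (fun n => Tn n) n
      have h1 : f.symm (WithTop.some n) ≤ ⟨U, hUqe⟩ := h0
      have h2 := f.monotone h1
      rwa [f.apply_symm_apply] at h2
    have htopc : f ⟨U, hUqe⟩ = ⊤ := by
      rcases hc : f ⟨U, hUqe⟩ with _ | m
      · rfl
      · exfalso
        have h3 := hle (m + 1)
        rw [hc] at h3
        exact absurd (WithTop.coe_le_coe.mp h3) (by omega)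
    have h4 : (⟨U, hUqe⟩ : {T : L.Theory // IsQETheory T₀ T}) = f.symm ⊤ := by
      rw [← htopc, f.symm_apply_apply]
    calc U = (f.symm ⊤).1 := congrArg Subtype.val h4
    _ = NoQTh17.QI L := htop
  -- δ belongs to some theory in the chain
  have hδU : NoQTh17.delta L ∈ U := by rw [hUtop]; exact NoQTh17.isQI_delta
  obtain ⟨N, hδA⟩ := Set.mem_iUnion.mp hδU
  set A : L.Theory := Tn N with hA
  have hAqe : IsQETheory T₀ A := (f.symm _).2
  -- a theory containing δ and all ρ_R is the top theory
  have exR : ∀ T : L.Theory, IsQETheory T₀ T → NoQTh17.delta L ∈ T → T ≠ NoQTh17.QI L →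
      ∃ (k : ℕ) (R : L.Relations k), NoQTh17.rho R ∉ T := by
    intro T hT hδ hne
    by_contra hall
    push_neg at hall
    apply hne
    refine subset_antisymm (fun σ h => hT.2.1 σ h) ?_
    rintro σ ⟨n, hyps, concl, hh, hc, rfl⟩
    refine hT.2.2 _ ⟨n, hyps, concl, hh, hc, rfl⟩ ?_
    refine NoQTh17.models_intro fun M _ _ hM => ?_
    haveI := hM
    haveI : Subsingleton M :=
      ⟨NoQTh17.realize_delta_iff.mp (Theory.realize_sentence_of_mem T hδ)⟩
    have hfull : ∀ {k : ℕ} (R : L.Relations k) (x : Fin k → M), Structure.RelMap R x :=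
      fun R x => NoQTh17.relMap_all
        (fun k R => Theory.realize_sentence_of_mem T (hall k R)) R x
    rw [NoQTh17.realize_alls_sentence]
    intro xs
    rw [BoundedFormula.realize_imp]
    intro _
    exact NoQTh17.realize_atomic_of_full hfull hc _ _
  -- construct R₂ with ρ₂ ∉ A
  have hAne : A ≠ NoQTh17.QI L := Tn_ne_top N
  obtain ⟨k₂, R₂, hR₂⟩ := exR A hAqe hδA hAne
  have hX₂ : ∀ σ ∈ A ∪ {NoQTh17.rho R₂}, IsQuasiIdentity σ := by
    rintro σ (h | h)
    · exact hAqe.2.1 σ h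
    · rw [Set.mem_singleton_iff] at h; rw [h]; exact NoQTh17.isQI_rho R₂
  set F₂ : L.Theory := NoQTh17.Ded (A ∪ {NoQTh17.rho R₂}) with hF₂def
  have hF₂qe : IsQETheory T₀ F₂ :=
    NoQTh17.Ded_isQE (hAqe.1.trans Set.subset_union_left) hX₂
  have hρ₂F₂ : NoQTh17.rho R₂ ∈ F₂ :=
    NoQTh17.subset_Ded hX₂ (Set.mem_union_right _ rfl)
  have hAF₂ : A ⊆ F₂ := Set.subset_union_left.trans (NoQTh17.subset_Ded hX₂)
  have hδF₂ : NoQTh17.delta L ∈ F₂ := hAF₂ hδA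
  -- theories generated over A by a single ρ_R are not the top theory
  have FRne : ∀ (k : ℕ) (R : L.Relations k),
      NoQTh17.Ded (A ∪ {NoQTh17.rho R}) ≠ NoQTh17.QI L := by
    intro k R heq
    have hρU : NoQTh17.rho R ∈ U := by rw [hUtop]; exact NoQTh17.isQI_rho R
    obtain ⟨m, hm⟩ := Set.mem_iUnion.mp hρU
    have hsubp : A ∪ {NoQTh17.rho R} ⊆ Tn (max m N) :=
      Set.union_subset (Tn_mono (le_max_right m N))
        (Set.singleton_subset_iff.mpr (Tn_mono (le_max_left m N) hm))
    have hd : NoQTh17.Ded (A ∪ {NoQTh17.rho R}) ⊆ Tn (max m N) :=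
      NoQTh17.Ded_le (f.symm _).2 hsubp
    exact Tn_ne_top (max m N)
      (subset_antisymm (fun σ h => (f.symm _).2.2.1 σ h) (heq ▸ hd))
  -- construct R₃ with ρ₃ ∉ F₂
  obtain ⟨k₃, R₃, hR₃⟩ := exR F₂ hF₂qe hδF₂ (FRne k₂ R₂)
  have hX₃ : ∀ σ ∈ A ∪ {NoQTh17.rho R₃}, IsQuasiIdentity σ := by
    rintro σ (h | h)
    · exact hAqe.2.1 σ h
    · rw [Set.mem_singleton_iff] at h; rw [h]; exact NoQTh17.isQI_rho R₃
  set F₃ : L.Theory := NoQTh17.Ded (A ∪ {NoQTh17.rho R₃}) with hF₃def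
  have hF₃qe : IsQETheory T₀ F₃ :=
    NoQTh17.Ded_isQE (hAqe.1.trans Set.subset_union_left) hX₃
  have hρ₃F₃ : NoQTh17.rho R₃ ∈ F₃ :=
    NoQTh17.subset_Ded hX₃ (Set.mem_union_right _ rfl)
  -- F₂ ⊆ F₃, so in particular ρ₂ ∈ F₃
  have hρ₂F₃ : NoQTh17.rho R₂ ∈ F₃ := by
    rcases chain ⟨F₂, hF₂qe⟩ ⟨F₃, hF₃qe⟩ with h | h
    · exact h hρ₂F₂
    · exact absurd (h hρ₃F₃) hR₃
  -- pick a quasi-identity u outside F₃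
  have hnsub : ¬ NoQTh17.QI L ⊆ F₃ := by
    intro h
    exact FRne k₃ R₃ (subset_antisymm (fun σ hσ => hσ.1) h)
  obtain ⟨uσ, huQI, huF₃⟩ := Set.not_subset.mp hnsub
  obtain ⟨n, hyps, concl, hh, hc, rfl⟩ := huQI
  -- the crucial quasi-identity σ* = (ρ₃ → u)
  set σs : L.Sentence := NoQTh17.star R₃ hyps concl with hσs
  have hXY : ∀ σ ∈ A ∪ {σs}, IsQuasiIdentity σ := by
    rintro σ (h | h)
    · exact hAqe.2.1 σ h
    · rw [Set.mem_singleton_iff] at h; rw [h]; exact NoQTh17.isQI_star R₃ hh hc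
  set Y : L.Theory := NoQTh17.Ded (A ∪ {σs}) with hYdef
  have hYqe : IsQETheory T₀ Y :=
    NoQTh17.Ded_isQE (hAqe.1.trans Set.subset_union_left) hXY
  have hσsY : σs ∈ Y := NoQTh17.subset_Ded hXY (Set.mem_union_right _ rfl)
  rcases chain ⟨Y, hYqe⟩ ⟨F₂, hF₂qe⟩ with hcase | hcase
  · -- Y ⊆ F₂ : then u ∈ F₃, contradiction
    have hσsF₂ : σs ∈ F₂ := hcase hσsY
    apply huF₃
    refine ⟨⟨n, hyps, concl, hh, hc, rfl⟩, ?_⟩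
    refine NoQTh17.models_intro fun M _ _ hM => ?_
    haveI := hM
    have hMρ₃ : M ⊨ NoQTh17.rho R₃ :=
      Theory.realize_sentence_of_mem (A ∪ {NoQTh17.rho R₃}) (Set.mem_union_right _ rfl)
    have hMA : M ⊨ A := hM.mono Set.subset_union_left
    have hMρ₂ : M ⊨ NoQTh17.rho R₂ := NoQTh17.models_elim hρ₂F₃.2 M hM
    have hM₂ : M ⊨ A ∪ {NoQTh17.rho R₂} :=
      hMA.union (Theory.model_singleton_iff.mpr hMρ₂)
    have hMσs : M ⊨ σs := NoQTh17.models_elim hσsF₂.2 M hM₂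
    exact NoQTh17.star_spec1 hh hc hMρ₃ hMσs
  · -- F₂ ⊆ Y : then ρ₂ ∈ Y, and a model of A refuting ρ₂ gives a contradiction
    have hρ₂Y : NoQTh17.rho R₂ ∈ Y := hcase hρ₂F₂
    have hnA : ¬ A ⊨ᵇ NoQTh17.rho R₂ := fun h => hR₂ (hAqe.2.2 _ (NoQTh17.isQI_rho R₂) h)
    unfold Theory.ModelsBoundedFormula at hnA
    push_neg at hnA
    obtain ⟨M, vv, xs, hre⟩ := hnA
    have hMnρ₂ : ¬ M.Carrier ⊨ NoQTh17.rho R₂ := fun h => hre (by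
      rw [Subsingleton.elim vv default, Subsingleton.elim xs default]
      exact h)
    haveI : Subsingleton M.Carrier :=
      ⟨NoQTh17.realize_delta_iff.mp (Theory.realize_sentence_of_mem A hδA)⟩
    have hMnρ₃ : ¬ M.Carrier ⊨ NoQTh17.rho R₃ := by
      intro h3
      have hM₃ : M.Carrier ⊨ A ∪ {NoQTh17.rho R₃} :=
        Theory.Model.union M.is_model (Theory.model_singleton_iff.mpr h3)
      exact hMnρ₂ (NoQTh17.models_elim hρ₂F₃.2 M.Carrier hM₃)
    have hMσs : M.Carrier ⊨ σs := NoQTh17.star_spec2 hMnρ₃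
    have hMY : M.Carrier ⊨ A ∪ {σs} :=
      Theory.Model.union M.is_model (Theory.model_singleton_iff.mpr hMσs)
    exact hMnρ₂ (NoQTh17.models_elim hρ₂Y.2 M.Carrier hMY)
end
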